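/- Let C be a Z₂Z₄[ξ]-skew cyclic code, identified with a left R₄[x,θ₄]-submodule of R_θ, and let Ψ : C → R₄[x,θ₄]/⟨x^s−1⟩ be the projection onto the second coordinate. Then ker(Ψ) is a left R₄[x,θ₄]-submodule of C generated by a single element of the form (f(x), 0), where f(x) ∈ R₂[x,θ₂] is a right divisor of x^r−1 in R₂[x,θ₂]; equivalently, the set I = {f(x) ∈ R₂[x,θ₂]/⟨x^r−1⟩ : (f(x),0) ∈ C} is a principally generated left R₂[x,θ₂]-submodule of R₂[x,θ₂]/⟨x^r−1⟩. -/

import Mathlib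

set_option synthInstance.maxHeartbeats 1000000
set_option maxHeartbeats 2000000
set_option linter.unusedSectionVars false

noncomputable section
open Polynomial

abbrev Z4 : Type := ZMod 4
abbrev Z2 : Type := ZMod 2

/-- The mod 2 reduction map `Z₄ → Z₂`. -/
def bar : Z4 →+* Z2 := ZMod.castHom (m := 2) (by norm_num) Z2

/-- The ring `R₄ = Z₄[x]/⟨h⟩` (for `h` basic primitive, the Galois ring `GR(4,m)`). -/
abbrev R4 (h : Z4[X]) : Type := Z4[X] ⧸ Ideal.span {h}

/-- The ring `R₂ = Z₂[x]/⟨h̄⟩` (for `h` basic primitive, the field `F_{2^m}`). -/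
abbrev R2 (h : Z4[X]) : Type := Z2[X] ⧸ Ideal.span {h.map bar}

/-- `ξ`, the class of `x` in `R₄`. -/
def xi (h : Z4[X]) : R4 h := Ideal.Quotient.mk _ X

/-- `ξ̄`, the class of `x` in `R₂`. -/
def xibar (h : Z4[X]) : R2 h := Ideal.Quotient.mk _ X

/-- The coefficientwise mod 2 reduction `R₄ → R₂`. -/
def barR (h : Z4[X]) : R4 h →+* R2 h :=
  Ideal.quotientMap (Ideal.span {h.map bar}) (Polynomial.mapRingHom bar)
    (by
      rw [Ideal.span_le]
      intro p hp
      simp only [Set.mem_singleton_iff] at hp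
      subst hp
      exact Ideal.mem_comap.mpr (Ideal.subset_span (by simp)))

/-- The canonical representative (of degree `< deg h`) of an element of `R₄`. -/
def rep4 (h : Z4[X]) (α : R4 h) : Z4[X] := Quotient.out α %ₘ h

/-- The canonical representative (of degree `< deg h̄`) of an element of `R₂`. -/
def rep2 (h : Z4[X]) (α : R2 h) : Z2[X] := Quotient.out α %ₘ (h.map bar)

/-- The Frobenius map `θ₄ : ∑ vᵢ ξ^i ↦ ∑ vᵢ ξ^{2i}` of `R₄`, as a bare function:
substitute `ξ²` in the canonical representative. -/
def thetaFun4 (h : Z4[X]) (α : R4 h) : R4 h := Polynomial.aeval (xi h ^ 2) (rep4 h α)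

/-- The Frobenius map `θ₂ : ∑ vᵢ ξ̄^i ↦ ∑ vᵢ ξ̄^{2i}` of `R₂`, as a bare function. -/
def thetaFun2 (h : Z4[X]) (α : R2 h) : R2 h := Polynomial.aeval (xibar h ^ 2) (rep2 h α)

/-- A lift `ι : R₂ → R₄` with `ι` mod 2 the identity: lift the coefficients of the
canonical representative from `{0,1}`. -/
def iota (h : Z4[X]) (α : R2 h) : R4 h :=
  Ideal.Quotient.mk _ ((rep2 h α).sum fun i a => C ((a.val : Z4)) * X ^ i)

/-- `h` is a monic basic primitive polynomial of degree `m`:  `h` is monic, its mod 2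
reduction `h̄` is irreducible over `Z₂`, and the root `ξ̄` of `h̄` is a primitive
element, i.e. has multiplicative order `2^m - 1`. -/
def BasicPrimitive (h : Z4[X]) (m : ℕ) : Prop :=
  h.Monic ∧ h.natDegree = m ∧ Irreducible (h.map bar) ∧ orderOf (xibar h) = 2 ^ m - 1

/-- The scalar multiplication `γ * (α,β) = (γ̄α, γβ)` making `R₂^r × R₄^s` (or any
mixed-alphabet tuple space) an `R₄`-module. -/
def smulStar (h : Z4[X]) {α β : Type*} (γ : R4 h) (v : (α → R2 h) × (β → R4 h)) :
    (α → R2 h) × (β → R4 h) :=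
  (fun i => barR h γ * v.1 i, fun j => γ * v.2 j)

/-! ### Skew polynomial rings -/

/-- The additive endomorphism `p(x) ↦ pᶿ(x)·x` of `A[x]` (the twisted shift). -/
def Tmap {A : Type*} [CommRing A] (θ : A →+* A) : AddMonoid.End (Polynomial A) :=
  (AddMonoidHom.mulRight (X : Polynomial A)).comp (Polynomial.mapRingHom θ).toAddMonoidHom

/-- Left multiplication by the constant `a`, as an additive endomorphism of `A[x]`. -/
def Lmap {A : Type*} [CommRing A] (a : A) : AddMonoid.End (Polynomial A) :=
  AddMonoidHom.mulLeft (C a)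

/-- The skew polynomial ring `A[x;θ]`, realized as the subring of additive
endomorphisms of `A[x]` generated by the constants (acting by left multiplication)
and the twisted shift `Tmap θ`.  In this model multiplication is composition, so
`(a·xᵏ)·(b·xʲ) = a θᵏ(b) x^{k+j}`, i.e. `x·a = θ(a)·x`. -/
def SkewPolySubring (A : Type*) [CommRing A] (θ : A →+* A) :
    Subring (AddMonoid.End (Polynomial A)) :=
  Subring.closure ((Set.range (Lmap (A := A))) ∪ {Tmap θ})

/-- The skew polynomial ring `A[x;θ]` as a type. -/
abbrev Skew (A : Type*) [CommRing A] (θ : A →+* A) : Type _ := SkewPolySubring A θ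

/-- The element `x` of `A[x;θ]`. -/
def xSkew (A : Type*) [CommRing A] (θ : A →+* A) : Skew A θ :=
  ⟨Tmap θ, Subring.subset_closure (Set.mem_union_right _ rfl)⟩

/-- The constant `a` as an element of `A[x;θ]`. -/
def cSkew {A : Type*} [CommRing A] (θ : A →+* A) (a : A) : Skew A θ :=
  ⟨Lmap a, Subring.subset_closure (Set.mem_union_left _ ⟨a, rfl⟩)⟩

/-- The skew polynomial `∑ aᵢ xⁱ ∈ A[x;θ]` attached to coefficient data `p = ∑ aᵢ Xⁱ`. -/
def ofPoly {A : Type*} [CommRing A] (θ : A →+* A) (p : Polynomial A) : Skew A θ :=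
  p.sum fun i a => cSkew θ a * xSkew A θ ^ i

/-- The coefficient data of a skew polynomial, recovered by applying the
endomorphism to the polynomial `1`. -/
def toPoly {A : Type*} [CommRing A] {θ : A →+* A} (f : Skew A θ) : Polynomial A :=
  (f : AddMonoid.End (Polynomial A)) 1

/-- `g |ᵣ p` : `g` is a right divisor of `p` in `A[x;θ]`, i.e. `p = u·g`. -/
def RDvd {A : Type*} [CommRing A] {θ : A →+* A} (g p : Skew A θ) : Prop :=
  ∃ u : Skew A θ, p = u * g

/-- The left ideal `⟨x^n - 1⟩` of `A[x;θ]`. -/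
def skewIdeal (A : Type*) [CommRing A] (θ : A →+* A) (n : ℕ) :
    Submodule (Skew A θ) (Skew A θ) :=
  Submodule.span (Skew A θ) {xSkew A θ ^ n - 1}

/-- The quotient left `A[x;θ]`-module `A[x;θ]/⟨x^n-1⟩`. -/
abbrev SkewQuot (A : Type*) [CommRing A] (θ : A →+* A) (n : ℕ) : Type _ :=
  Skew A θ ⧸ skewIdeal A θ n

/-- The polynomial `c₀ + c₁X + ⋯ + c_{n-1}X^{n-1}` attached to a word `c ∈ Aⁿ`. -/
def wordPoly {A : Type*} [CommRing A] {n : ℕ} (c : Fin n → A) : Polynomial A :=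
  ∑ i : Fin n, C (c i) * X ^ (i : ℕ)

/-- Identify the word `c ∈ Aⁿ` with the class of `∑ cᵢ xⁱ` in `A[x;θ]/⟨x^n-1⟩`. -/
def wordToQuot {A : Type*} [CommRing A] (θ : A →+* A) {n : ℕ} (c : Fin n → A) :
    SkewQuot A θ n :=
  Submodule.Quotient.mk (ofPoly θ (wordPoly c))

/-- A linear code of length `n` over `A`: an `A`-submodule of `Aⁿ`, as a set. -/
def IsLinearCode (A : Type*) [CommRing A] {n : ℕ} (C : Set (Fin n → A)) : Prop :=
  0 ∈ C ∧ (∀ u ∈ C, ∀ v ∈ C, u + v ∈ C) ∧ ∀ γ : A, ∀ u ∈ C, γ • u ∈ C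

/-- The `θ`-cyclic shift `(c₀,…,c_{n-1}) ↦ (θ(c_{n-1}),θ(c₀),…,θ(c_{n-2}))`. -/
def skewShift {A : Type*} [CommRing A] (θ : A →+* A) {n : ℕ} [NeZero n]
    (c : Fin n → A) : Fin n → A :=
  fun i => θ (c (i - 1))
section SkewLemmas
variable {A : Type*} [CommRing A] (θ : A →+* A)

lemma skew_ext {f g : Skew A θ}
    (hfg : ∀ p, (f : AddMonoid.End (Polynomial A)) p = (g : AddMonoid.End (Polynomial A)) p) :
    f = g := Subtype.ext (AddMonoidHom.ext hfg)

lemma cSkew_val_apply (a : A) (p : Polynomial A) :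
    ((cSkew θ a : Skew A θ) : AddMonoid.End (Polynomial A)) p = C a * p := rfl

lemma xSkew_val_apply (p : Polynomial A) :
    ((xSkew A θ : Skew A θ) : AddMonoid.End (Polynomial A)) p = p.map θ * X := rfl

lemma mul_val_apply (f g : Skew A θ) (p : Polynomial A) :
    ((f * g : Skew A θ) : AddMonoid.End (Polynomial A)) p
      = (f : AddMonoid.End (Polynomial A)) ((g : AddMonoid.End (Polynomial A)) p) := rfl

lemma cSkew_zero : cSkew θ (0 : A) = 0 := by
  apply skew_ext; intro p; simp [cSkew_val_apply]

lemma cSkew_add (a b : A) : cSkew θ (a + b) = cSkew θ a + cSkew θ b := by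
  apply skew_ext; intro p
  simp only [cSkew_val_apply, map_add, add_mul]
  rfl

lemma cSkew_one : cSkew θ (1 : A) = 1 := by
  apply skew_ext; intro p; simp [cSkew_val_apply]

lemma cSkew_mul (a b : A) : cSkew θ (a * b) = cSkew θ a * cSkew θ b := by
  apply skew_ext; intro p
  simp [cSkew_val_apply, mul_val_apply, mul_assoc]

lemma ofPoly_monomial (k : ℕ) (a : A) :
    ofPoly θ (monomial k a) = cSkew θ a * xSkew A θ ^ k := by
  unfold ofPoly
  rw [Polynomial.sum_monomial_index]
  rw [cSkew_zero]; exact zero_mul _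

lemma ofPoly_add (p q : Polynomial A) :
    ofPoly θ (p + q) = ofPoly θ p + ofPoly θ q := by
  unfold ofPoly
  rw [Polynomial.sum_add_index]
  · intro i; rw [cSkew_zero]; exact zero_mul _
  · intro i b c; rw [cSkew_add]; exact add_mul _ _ _

def ofPolyHom : Polynomial A →+ Skew A θ where
  toFun := ofPoly θ
  map_zero' := by simp [ofPoly]
  map_add' := ofPoly_add θ

lemma ofPoly_zero : ofPoly θ (0 : Polynomial A) = 0 := (ofPolyHom θ).map_zero
lemma ofPoly_neg (p : Polynomial A) : ofPoly θ (-p) = - ofPoly θ p := (ofPolyHom θ).map_neg p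
lemma ofPoly_sub (p q : Polynomial A) : ofPoly θ (p - q) = ofPoly θ p - ofPoly θ q :=
  (ofPolyHom θ).map_sub p q

lemma ofPoly_C (a : A) : ofPoly θ (C a) = cSkew θ a := by
  rw [← Polynomial.monomial_zero_left, ofPoly_monomial, pow_zero, mul_one]

lemma ofPoly_X : ofPoly θ (X : Polynomial A) = xSkew A θ := by
  rw [← Polynomial.monomial_one_one_eq_X, ofPoly_monomial, cSkew_one, pow_one, one_mul]

lemma ofPoly_X_pow (k : ℕ) : ofPoly θ ((X : Polynomial A) ^ k) = xSkew A θ ^ k := by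
  rw [Polynomial.X_pow_eq_monomial, ofPoly_monomial, cSkew_one, one_mul]

lemma ofPoly_one : ofPoly θ (1 : Polynomial A) = 1 := by
  rw [← Polynomial.C_1, ofPoly_C, cSkew_one]

lemma x_mul_cSkew (a : A) :
    xSkew A θ * cSkew θ a = cSkew θ (θ a) * xSkew A θ := by
  apply skew_ext; intro p
  rw [mul_val_apply, mul_val_apply, cSkew_val_apply, xSkew_val_apply, xSkew_val_apply,
    cSkew_val_apply, Polynomial.map_mul, map_C, mul_assoc]

/-- the "multiply by x" operation on coefficient data. -/
def tw (q : Polynomial A) : Polynomial A := q.map θ * X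

lemma tw_add (p q : Polynomial A) : tw θ (p + q) = tw θ p + tw θ q := by
  unfold tw; rw [Polynomial.map_add, add_mul]

lemma x_mul_ofPoly (q : Polynomial A) :
    xSkew A θ * ofPoly θ q = ofPoly θ (tw θ q) := by
  induction q using Polynomial.induction_on' with
  | add p q hp hq => rw [ofPoly_add, mul_add, hp, hq, tw_add, ofPoly_add]
  | monomial k a =>
      rw [ofPoly_monomial, ← mul_assoc, x_mul_cSkew, mul_assoc, ← pow_succ']
      unfold tw
      rw [Polynomial.map_monomial, Polynomial.monomial_mul_X, ofPoly_monomial]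

lemma c_mul_ofPoly (a : A) (q : Polynomial A) :
    cSkew θ a * ofPoly θ q = ofPoly θ (C a * q) := by
  induction q using Polynomial.induction_on' with
  | add p q hp hq => rw [ofPoly_add, mul_add, hp, hq, mul_add, ofPoly_add]
  | monomial k b =>
      rw [ofPoly_monomial, ← mul_assoc, ← cSkew_mul, Polynomial.C_mul_monomial,
        ofPoly_monomial]

lemma xpow_mul_ofPoly (k : ℕ) (q : Polynomial A) :
    xSkew A θ ^ k * ofPoly θ q = ofPoly θ ((tw θ)^[k] q) := by
  induction k with
  | zero => simp
  | succ k ih =>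
      rw [pow_succ', mul_assoc, ih, x_mul_ofPoly, Function.iterate_succ_apply']

lemma mul_ofPoly (p q : Polynomial A) :
    ofPoly θ p * ofPoly θ q = ofPoly θ (p.sum fun k a => C a * (tw θ)^[k] q) := by
  induction p using Polynomial.induction_on' with
  | add p p' hp hp' =>
      rw [ofPoly_add, add_mul, hp, hp', Polynomial.sum_add_index, ofPoly_add]
      · intro i; rw [C_0, zero_mul]
      · intro i b c; rw [C_add, add_mul]
  | monomial k a =>
      rw [ofPoly_monomial, Polynomial.sum_monomial_index, mul_assoc, xpow_mul_ofPoly,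
        c_mul_ofPoly]
      rw [C_0, zero_mul]

lemma xpow_val_one (k : ℕ) :
    ((xSkew A θ ^ k : Skew A θ) : AddMonoid.End (Polynomial A)) 1 = (X : Polynomial A) ^ k := by
  induction k with
  | zero => rfl
  | succ k ih =>
      rw [pow_succ', mul_val_apply, ih, xSkew_val_apply, Polynomial.map_pow, map_X, ← pow_succ]

def toPolyHom : Skew A θ →+ Polynomial A where
  toFun := toPoly
  map_zero' := rfl
  map_add' := fun _ _ => rfl

lemma toPoly_c_mul_xpow (a : A) (i : ℕ) :
    toPoly (cSkew θ a * xSkew A θ ^ i) = C a * X ^ i := by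
  rw [toPoly, mul_val_apply, xpow_val_one, cSkew_val_apply]

lemma toPoly_ofPoly (p : Polynomial A) : toPoly (ofPoly θ p) = p := by
  have : toPoly (ofPoly θ p) = toPolyHom θ (ofPoly θ p) := rfl
  rw [this, ofPoly, Polynomial.sum, map_sum]
  simp only [toPolyHom, AddMonoidHom.coe_mk, ZeroHom.coe_mk, toPoly_c_mul_xpow]
  show ∑ x ∈ p.support, toPoly (cSkew θ (p.coeff x) * xSkew A θ ^ x) = p
  simp only [toPoly_c_mul_xpow]
  exact Polynomial.sum_C_mul_X_pow_eq p

lemma ofPoly_toPoly (f : Skew A θ) : ofPoly θ (toPoly f) = f := by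
  let S : Subring (AddMonoid.End (Polynomial A)) :=
    { carrier := Set.range (fun p : Polynomial A => ((ofPoly θ p : Skew A θ) : AddMonoid.End (Polynomial A)))
      zero_mem' := ⟨0, by dsimp only; rw [ofPoly_zero]; rfl⟩
      one_mem' := ⟨1, by dsimp only; rw [ofPoly_one]; rfl⟩
      add_mem' := by
        rintro _ _ ⟨p, rfl⟩ ⟨q, rfl⟩
        exact ⟨p + q, by dsimp only; rw [ofPoly_add]; rfl⟩
      neg_mem' := by
        rintro _ ⟨p, rfl⟩
        exact ⟨-p, by dsimp only; rw [ofPoly_neg]; rfl⟩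
      mul_mem' := by
        rintro _ _ ⟨p, rfl⟩ ⟨q, rfl⟩
        exact ⟨_, by dsimp only; rw [← mul_ofPoly θ p q]; rfl⟩ }
  have hle : SkewPolySubring A θ ≤ S := by
    rw [SkewPolySubring, Subring.closure_le]
    rintro e (⟨a, rfl⟩ | rfl)
    · exact ⟨C a, by dsimp only; rw [ofPoly_C]; rfl⟩
    · exact ⟨X, by dsimp only; rw [ofPoly_X]; rfl⟩
  obtain ⟨p, hp⟩ := hle f.2
  have : f = ofPoly θ p := Subtype.ext hp.symm
  rw [this, toPoly_ofPoly]

end SkewLemmas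

section Division
variable {A : Type*} [CommRing A] [Nontrivial A] [NoZeroDivisors A] (θ : A →+* A)

lemma tw_iter_ne_zero (hinj : Function.Injective ⇑θ) (k : ℕ) {q : Polynomial A} (hq : q ≠ 0) :
    (tw θ)^[k] q ≠ 0 := by
  induction k with
  | zero => exact hq
  | succ k ih =>
      rw [Function.iterate_succ_apply']
      exact mul_ne_zero ((Polynomial.map_ne_zero_iff hinj).mpr ih) Polynomial.X_ne_zero

lemma natDegree_tw_iter (hinj : Function.Injective ⇑θ) (k : ℕ) {q : Polynomial A} (hq : q ≠ 0) :
    ((tw θ)^[k] q).natDegree = q.natDegree + k := by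
  induction k with
  | zero => rfl
  | succ k ih =>
      rw [Function.iterate_succ_apply', tw,
        Polynomial.natDegree_mul_X ((Polynomial.map_ne_zero_iff hinj).mpr (tw_iter_ne_zero θ hinj k hq)),
        Polynomial.natDegree_map_eq_of_injective hinj, ih, Nat.add_assoc]

lemma leadingCoeff_tw_iter (hinj : Function.Injective ⇑θ) (k : ℕ) (q : Polynomial A) :
    ((tw θ)^[k] q).leadingCoeff = (⇑θ)^[k] q.leadingCoeff := by
  induction k with
  | zero => rfl
  | succ k ih =>
      rw [Function.iterate_succ_apply', tw, Polynomial.leadingCoeff_mul_X,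
        Polynomial.leadingCoeff_map_of_injective hinj, ih, Function.iterate_succ_apply']

lemma theta_iter_ne_zero (hinj : Function.Injective ⇑θ) (k : ℕ) {a : A} (ha : a ≠ 0) :
    (⇑θ)^[k] a ≠ 0 := by
  induction k with
  | zero => exact ha
  | succ k ih =>
      rw [Function.iterate_succ_apply']
      intro hzero
      exact ih (by rwa [← map_zero θ, hinj.eq_iff] at hzero)

lemma skew_division (hinj : Function.Injective ⇑θ)
    (hinv : ∀ a : A, a ≠ 0 → ∃ b, a * b = 1)
    (g : Polynomial A) (hg : g ≠ 0) (p : Polynomial A) :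
    ∃ (u : Skew A θ) (rem : Polynomial A),
      ofPoly θ p = u * ofPoly θ g + ofPoly θ rem ∧ rem.degree < g.degree := by
  have hgbot : (⊥ : WithBot ℕ) < g.degree :=
    bot_lt_iff_ne_bot.mpr fun hb => hg (Polynomial.degree_eq_bot.mp hb)
  obtain ⟨n, hn⟩ : ∃ n, p.natDegree ≤ n := ⟨p.natDegree, le_rfl⟩
  induction n using Nat.strong_induction_on generalizing p with
  | _ n ih =>
    by_cases hlt : p.degree < g.degree
    · exact ⟨0, p, by rw [zero_mul, zero_add], hlt⟩
    push_neg at hlt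
    have hp : p ≠ 0 := by
      intro hp0
      rw [hp0, Polynomial.degree_zero] at hlt
      exact absurd (le_antisymm hlt (le_of_lt hgbot)) (ne_of_gt hgbot)
    set j := p.natDegree - g.natDegree with hj
    have hnd : g.natDegree ≤ p.natDegree := Polynomial.natDegree_le_natDegree hlt
    have hb : (⇑θ)^[j] g.leadingCoeff ≠ 0 :=
      theta_iter_ne_zero θ hinj j (Polynomial.leadingCoeff_ne_zero.mpr hg)
    obtain ⟨binv, hbinv⟩ := hinv _ hb
    set c := p.leadingCoeff * binv with hc
    have hcb : c * (⇑θ)^[j] g.leadingCoeff = p.leadingCoeff := by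
      rw [hc, mul_assoc, mul_comm binv, hbinv, mul_one]
    have hc0 : c ≠ 0 := by
      intro h0
      rw [h0, zero_mul] at hcb
      exact Polynomial.leadingCoeff_ne_zero.mpr hp hcb.symm
    set t : Polynomial A := C c * (tw θ)^[j] g with ht
    have ht0 : t ≠ 0 := mul_ne_zero (by simpa using hc0) (tw_iter_ne_zero θ hinj j hg)
    have htl : t.leadingCoeff = p.leadingCoeff := by
      rw [ht, Polynomial.leadingCoeff_mul, Polynomial.leadingCoeff_C,
        leadingCoeff_tw_iter θ hinj, hcb]
    have htnd : t.natDegree = p.natDegree := by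
      rw [ht, Polynomial.natDegree_C_mul hc0, natDegree_tw_iter θ hinj j hg, hj,
        Nat.add_sub_cancel' hnd]
    have htd : p.degree = t.degree := by
      rw [Polynomial.degree_eq_natDegree hp, Polynomial.degree_eq_natDegree ht0, htnd]
    have hofs : ofPoly θ t = (cSkew θ c * xSkew A θ ^ j) * ofPoly θ g := by
      rw [mul_assoc, xpow_mul_ofPoly, c_mul_ofPoly]
    have hdlt : (p - t).degree < p.degree := Polynomial.degree_sub_lt htd hp htl.symm
    by_cases hp' : p - t = 0
    · refine ⟨cSkew θ c * xSkew A θ ^ j, 0, ?_, by simpa using hgbot⟩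
      have : p = t := sub_eq_zero.mp hp'
      rw [ofPoly_zero, add_zero, this, hofs]
    · have hnd' : (p - t).natDegree < n :=
        lt_of_lt_of_le (Polynomial.natDegree_lt_natDegree hp' hdlt) hn
      obtain ⟨u', rem, heq, hrem⟩ := ih (p - t).natDegree hnd' (p - t) le_rfl
      refine ⟨u' + cSkew θ c * xSkew A θ ^ j, rem, ?_, hrem⟩
      have hsplit : ofPoly θ p = ofPoly θ (p - t) + ofPoly θ t := by
        rw [← ofPoly_add]; ring_nf
      rw [hsplit, heq, hofs, add_mul]
      abel

end Division


section QuotWordLemmas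
variable {A : Type*} [CommRing A] (θ : A →+* A)

lemma mk_skewIdeal_xpow_sub_one (n : ℕ) :
    (Submodule.Quotient.mk (p := skewIdeal A θ n) (xSkew A θ ^ n - 1)) = 0 :=
  (Submodule.Quotient.mk_eq_zero _).mpr (Submodule.mem_span_singleton_self _)

lemma wordPoly_add {n : ℕ} (c d : Fin n → A) :
    wordPoly (c + d) = wordPoly c + wordPoly d := by
  unfold wordPoly
  rw [← Finset.sum_add_distrib]
  exact Finset.sum_congr rfl fun i _ => by rw [Pi.add_apply, C_add, add_mul]

lemma wordPoly_zero {n : ℕ} : wordPoly (0 : Fin n → A) = 0 := by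
  simp [wordPoly]

lemma wordPoly_smul {n : ℕ} (γ : A) (c : Fin n → A) :
    wordPoly (fun i => γ * c i) = C γ * wordPoly c := by
  unfold wordPoly
  rw [Finset.mul_sum]
  exact Finset.sum_congr rfl fun i _ => by rw [C_mul, mul_assoc]

lemma wordToQuot_add {n : ℕ} (c d : Fin n → A) :
    wordToQuot θ (c + d) = wordToQuot θ c + wordToQuot θ d := by
  unfold wordToQuot
  rw [wordPoly_add, ofPoly_add, Submodule.Quotient.mk_add]

lemma wordToQuot_zero {n : ℕ} : wordToQuot θ (0 : Fin n → A) = 0 := by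
  unfold wordToQuot
  rw [wordPoly_zero, ofPoly_zero, Submodule.Quotient.mk_zero]

lemma wordToQuot_neg {n : ℕ} (c : Fin n → A) :
    wordToQuot θ (-c) = - wordToQuot θ c := by
  have h : wordToQuot θ (-c) + wordToQuot θ c = 0 := by
    rw [← wordToQuot_add, neg_add_cancel, wordToQuot_zero]
  exact eq_neg_of_add_eq_zero_left h

lemma wordToQuot_smul {n : ℕ} (γ : A) (c : Fin n → A) :
    wordToQuot θ (fun i => γ * c i) = cSkew θ γ • wordToQuot θ c := by
  unfold wordToQuot
  rw [wordPoly_smul, ← c_mul_ofPoly, ← smul_eq_mul, Submodule.Quotient.mk_smul]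

lemma wordToQuot_shift {n : ℕ} [NeZero n] (c : Fin n → A) :
    wordToQuot θ (skewShift θ c) = xSkew A θ • wordToQuot θ c := by
  obtain ⟨k, rfl⟩ : ∃ k, n = k + 1 := ⟨n - 1, (Nat.succ_pred_eq_of_pos (NeZero.pos n)).symm⟩
  have htw : tw θ (wordPoly c) = ∑ i : Fin (k+1), C (θ (c i)) * X ^ ((i : ℕ) + 1) := by
    unfold tw wordPoly
    rw [Polynomial.map_sum, Finset.sum_mul]
    exact Finset.sum_congr rfl fun i _ => by
      rw [Polynomial.map_mul, Polynomial.map_C, Polynomial.map_pow, Polynomial.map_X,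
        mul_assoc, ← pow_succ]
  have hls : wordPoly (skewShift θ c)
      = ∑ i : Fin (k+1), C (θ (c i)) * X ^ (((i + 1 : Fin (k+1))) : ℕ) := by
    unfold wordPoly skewShift
    refine (Fintype.sum_equiv (Equiv.addRight (1 : Fin (k+1)))
      (fun i => C (θ (c i)) * X ^ (((i + 1 : Fin (k+1))) : ℕ))
      (fun i => C (θ (c (i - 1))) * X ^ (i : ℕ)) (fun i => by simp)).symm
  have key : wordPoly (skewShift θ c)
      = C (θ (c (Fin.last k))) * (1 - X ^ (k+1)) + tw θ (wordPoly c) := by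
    rw [htw, hls,
      ← Finset.add_sum_erase _ _ (Finset.mem_univ (Fin.last k)),
      ← Finset.add_sum_erase _ (fun i : Fin (k+1) => C (θ (c i)) * X ^ ((i : ℕ) + 1))
        (Finset.mem_univ (Fin.last k))]
    have h1 : (((Fin.last k + 1 : Fin (k+1))) : ℕ) = 0 := by
      rw [Fin.val_add_one, if_pos rfl]
    have h3 : ∀ i ∈ Finset.univ.erase (Fin.last k),
        C (θ (c i)) * X ^ (((i + 1 : Fin (k+1))) : ℕ) = C (θ (c i)) * X ^ ((i : ℕ) + 1) := by
      intro i hi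
      rw [Fin.val_add_one, if_neg (Finset.ne_of_mem_erase hi)]
    rw [Finset.sum_congr rfl h3, h1]
    have h2 : ((Fin.last k : Fin (k+1)) : ℕ) = k := rfl
    rw [h2, pow_zero]
    ring
  unfold wordToQuot
  have hz : (Submodule.Quotient.mk (p := skewIdeal A θ (k+1))
      (ofPoly θ (C (θ (c (Fin.last k))) * (1 - X ^ (k+1))))) = 0 := by
    rw [Submodule.Quotient.mk_eq_zero, ← c_mul_ofPoly, ofPoly_sub, ofPoly_one, ofPoly_X_pow]
    have : cSkew θ (θ (c (Fin.last k))) * (1 - xSkew A θ ^ (k+1))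
        = (-(cSkew θ (θ (c (Fin.last k))))) • (xSkew A θ ^ (k+1) - 1) := by
      simp only [smul_eq_mul, neg_mul, mul_sub, mul_one, neg_sub]
      abel
    rw [this]
    exact Submodule.smul_mem _ _ (Submodule.mem_span_singleton_self _)
  rw [key, ofPoly_add, Submodule.Quotient.mk_add, hz, zero_add, ← x_mul_ofPoly,
    ← smul_eq_mul (α := Skew A θ), Submodule.Quotient.mk_smul]

end QuotWordLemmas

/-! ### The module `R_θ` and `Z₂Z₄[ξ]`-codes -/

/-- A `Z₂Z₄[ξ]`-linear code: an `R₄`-submodule of `R₂^r × R₄^s` (as a set). -/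
def IsZ2Z4Linear (h : Z4[X]) {r s : ℕ} (C : Set ((Fin r → R2 h) × (Fin s → R4 h))) : Prop :=
  0 ∈ C ∧ (∀ u ∈ C, ∀ v ∈ C, u + v ∈ C) ∧ ∀ γ : R4 h, ∀ u ∈ C, smulStar h γ u ∈ C

/-- The joint `θ`-cyclic shift on `R₂^r × R₄^s`. -/
def jointShift (h : Z4[X]) (θ2 : R2 h →+* R2 h) (θ4 : R4 h →+* R4 h) {r s : ℕ}
    [NeZero r] [NeZero s] (v : (Fin r → R2 h) × (Fin s → R4 h)) :
    (Fin r → R2 h) × (Fin s → R4 h) :=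
  (skewShift θ2 v.1, skewShift θ4 v.2)

/-- The identification of `R₂^r × R₄^s` with
`R_θ = R₂[x;θ₂]/⟨x^r-1⟩ × R₄[x;θ₄]/⟨x^s-1⟩`. -/
def pairToQuot (h : Z4[X]) (θ2 : R2 h →+* R2 h) (θ4 : R4 h →+* R4 h) {r s : ℕ}
    (v : (Fin r → R2 h) × (Fin s → R4 h)) :
    SkewQuot (R2 h) θ2 r × SkewQuot (R4 h) θ4 s :=
  (wordToQuot θ2 v.1, wordToQuot θ4 v.2)

/-- The coefficientwise mod 2 reduction `R₄[x;θ₄] → R₂[x;θ₂]`, `f ↦ f̄`. -/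
def redSkew (h : Z4[X]) (θ2 : R2 h →+* R2 h) {θ4 : R4 h →+* R4 h}
    (f : Skew (R4 h) θ4) : Skew (R2 h) θ2 :=
  ofPoly θ2 ((toPoly f).map (barR h))

/-- The left action of `R₄[x;θ₄]` on `R_θ`, `f * (g(x), h(x)) = (f̄ g mod (x^r-1), f h mod (x^s-1))`. -/
def smulRtheta (h : Z4[X]) (θ2 : R2 h →+* R2 h) (θ4 : R4 h →+* R4 h) {r s : ℕ}
    (f : Skew (R4 h) θ4)
    (u : SkewQuot (R2 h) θ2 r × SkewQuot (R4 h) θ4 s) :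
    SkewQuot (R2 h) θ2 r × SkewQuot (R4 h) θ4 s :=
  (redSkew h θ2 f • u.1, f • u.2)

/-- `D` is a left `R₄[x;θ₄]`-submodule of `R_θ` (with respect to the action above). -/
def IsLeftSubmodRtheta (h : Z4[X]) (θ2 : R2 h →+* R2 h) (θ4 : R4 h →+* R4 h) {r s : ℕ}
    (D : Set (SkewQuot (R2 h) θ2 r × SkewQuot (R4 h) θ4 s)) : Prop :=
  0 ∈ D ∧ (∀ u ∈ D, ∀ v ∈ D, u + v ∈ D) ∧
    ∀ f : Skew (R4 h) θ4, ∀ u ∈ D, smulRtheta h θ2 θ4 f u ∈ D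


section R2R4Lemmas
variable (h : Z4[X])

lemma bar_surjective : Function.Surjective ⇑bar := by decide

lemma barR_mk (p : Z4[X]) :
    barR h (Ideal.Quotient.mk (Ideal.span {h}) p)
      = Ideal.Quotient.mk (Ideal.span {h.map bar}) (p.map bar) :=
  Ideal.quotientMap_mk

lemma barR_surjective : Function.Surjective (barR h) := by
  intro y
  obtain ⟨q, rfl⟩ := Ideal.Quotient.mk_surjective y
  obtain ⟨p, rfl⟩ := Polynomial.map_surjective bar bar_surjective q
  exact ⟨Ideal.Quotient.mk _ p, barR_mk h p⟩

lemma mk_rep4 (hmon : h.Monic) (a : R4 h) :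
    Ideal.Quotient.mk (Ideal.span {h}) (rep4 h a) = a := by
  unfold rep4
  rw [Polynomial.modByMonic_eq_sub_mul_div _ h, map_sub, map_mul]
  have hh : Ideal.Quotient.mk (Ideal.span {h}) h = 0 :=
    Ideal.Quotient.eq_zero_iff_mem.mpr (Ideal.subset_span rfl)
  rw [hh, zero_mul, sub_zero]
  exact Quotient.out_eq' a

lemma mk_rep2 (hmon : h.Monic) (a : R2 h) :
    Ideal.Quotient.mk (Ideal.span {h.map bar}) (rep2 h a) = a := by
  unfold rep2
  rw [Polynomial.modByMonic_eq_sub_mul_div _ (h.map bar), map_sub, map_mul]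
  have hh : Ideal.Quotient.mk (Ideal.span {h.map bar}) (h.map bar) = 0 :=
    Ideal.Quotient.eq_zero_iff_mem.mpr (Ideal.subset_span rfl)
  rw [hh, zero_mul, sub_zero]
  exact Quotient.out_eq' a

lemma frobZ2_eq_id : (frobenius Z2 2) = RingHom.id Z2 := by
  refine RingHom.ext fun z => ?_
  rw [frobenius_def]
  revert z; decide

lemma hbar_comp_Xsq : (h.map bar).comp (X ^ 2) = (h.map bar) ^ 2 := by
  calc (h.map bar).comp (X ^ 2) = Polynomial.expand Z2 2 (h.map bar) :=
        (Polynomial.expand_eq_comp_X_pow 2).symm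
    _ = Polynomial.map (frobenius Z2 2) (Polynomial.expand Z2 2 (h.map bar)) := by
        rw [frobZ2_eq_id, Polynomial.map_id]
    _ = (h.map bar) ^ 2 := by rw [Polynomial.map_frobenius_expand]

lemma comp_Xsq_congr (P Q : Polynomial Z2)
    (hPQ : Ideal.Quotient.mk (Ideal.span {h.map bar}) P = Ideal.Quotient.mk (Ideal.span {h.map bar}) Q) :
    Ideal.Quotient.mk (Ideal.span {h.map bar}) (P.comp (X ^ 2))
      = Ideal.Quotient.mk (Ideal.span {h.map bar}) (Q.comp (X ^ 2)) := by
  rw [Ideal.Quotient.mk_eq_mk_iff_sub_mem] at hPQ ⊢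
  obtain ⟨t, ht⟩ := Ideal.mem_span_singleton'.mp hPQ
  have hdiff : P.comp (X ^ 2) - Q.comp (X ^ 2)
      = (t.comp (X ^ 2) * (h.map bar)) * (h.map bar) := by
    rw [← Polynomial.sub_comp, ← ht, Polynomial.mul_comp, hbar_comp_Xsq]
    ring
  rw [hdiff]
  exact Ideal.mem_span_singleton'.mpr ⟨_, rfl⟩

lemma thetaFun4_eq (a : R4 h) :
    thetaFun4 h a = Ideal.Quotient.mk (Ideal.span {h}) ((rep4 h a).comp (X ^ 2)) := by
  unfold thetaFun4 xi
  rw [← map_pow, ← Ideal.Quotient.mkₐ_eq_mk Z4, Polynomial.aeval_algHom_apply]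
  exact congrArg _ (by rw [Polynomial.aeval_def, Polynomial.algebraMap_eq]; rfl)

lemma thetaFun2_eq (a : R2 h) :
    thetaFun2 h a = Ideal.Quotient.mk (Ideal.span {h.map bar}) ((rep2 h a).comp (X ^ 2)) := by
  unfold thetaFun2 xibar
  rw [← map_pow, ← Ideal.Quotient.mkₐ_eq_mk Z2, Polynomial.aeval_algHom_apply]
  exact congrArg _ (by rw [Polynomial.aeval_def, Polynomial.algebraMap_eq]; rfl)

lemma barR_theta_comm (hmon : h.Monic) (a : R4 h) :
    barR h (thetaFun4 h a) = thetaFun2 h (barR h a) := by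
  rw [thetaFun4_eq, barR_mk, thetaFun2_eq]
  have hmap : ((rep4 h a).comp (X ^ 2)).map bar = ((rep4 h a).map bar).comp (X ^ 2) := by
    rw [Polynomial.map_comp, Polynomial.map_pow, Polynomial.map_X]
  rw [hmap]
  apply comp_Xsq_congr
  rw [← barR_mk, mk_rep4 h hmon, mk_rep2 h hmon]

end R2R4Lemmas

section RedSkewLemmas
variable (h : Z4[X]) (θ2 : R2 h →+* R2 h) (θ4 : R4 h →+* R4 h)

lemma redSkew_ofPoly (p : Polynomial (R4 h)) :
    redSkew h θ2 (θ4 := θ4) (ofPoly θ4 p) = ofPoly θ2 (p.map (barR h)) := by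
  unfold redSkew; rw [toPoly_ofPoly]

lemma redSkew_surjective : Function.Surjective (redSkew h θ2 (θ4 := θ4)) := by
  intro d
  obtain ⟨P, hP⟩ := Polynomial.map_surjective (barR h) (barR_surjective h) (toPoly d)
  exact ⟨ofPoly θ4 P, by rw [redSkew_ofPoly, hP, ofPoly_toPoly]⟩

lemma redSkew_zero : redSkew h θ2 (θ4 := θ4) 0 = 0 := by
  unfold redSkew
  rw [show toPoly (0 : Skew (R4 h) θ4) = 0 from rfl, Polynomial.map_zero, ofPoly_zero]

lemma redSkew_one : redSkew h θ2 (θ4 := θ4) 1 = 1 := by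
  unfold redSkew
  rw [show toPoly (1 : Skew (R4 h) θ4) = 1 from rfl, Polynomial.map_one, ofPoly_one]

lemma redSkew_add (f g : Skew (R4 h) θ4) :
    redSkew h θ2 (f + g) = redSkew h θ2 f + redSkew h θ2 g := by
  unfold redSkew
  rw [show toPoly (f + g) = toPoly f + toPoly g from rfl, Polynomial.map_add, ofPoly_add]

lemma redSkew_neg (f : Skew (R4 h) θ4) :
    redSkew h θ2 (-f) = - redSkew h θ2 f := by
  unfold redSkew
  rw [show toPoly (-f) = - toPoly f from rfl, Polynomial.map_neg, ofPoly_neg]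

lemma tw_map_iter (hbc : ∀ a : R4 h, barR h (θ4 a) = θ2 (barR h a)) (k : ℕ) (Q : Polynomial (R4 h)) :
    ((tw θ4)^[k] Q).map (barR h) = (tw θ2)^[k] (Q.map (barR h)) := by
  have hcomp : (barR h).comp θ4 = θ2.comp (barR h) := RingHom.ext hbc
  induction k with
  | zero => rfl
  | succ k ih =>
      rw [Function.iterate_succ_apply', Function.iterate_succ_apply', tw, tw,
        Polynomial.map_mul, Polynomial.map_X, Polynomial.map_map, hcomp,
        ← Polynomial.map_map, ih]

lemma redSkew_mul (hbc : ∀ a : R4 h, barR h (θ4 a) = θ2 (barR h a)) (f g : Skew (R4 h) θ4) :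
    redSkew h θ2 (f * g) = redSkew h θ2 f * redSkew h θ2 g := by
  obtain ⟨P, rfl⟩ : ∃ P, f = ofPoly θ4 P := ⟨toPoly f, (ofPoly_toPoly θ4 f).symm⟩
  obtain ⟨Q, rfl⟩ : ∃ Q, g = ofPoly θ4 Q := ⟨toPoly g, (ofPoly_toPoly θ4 g).symm⟩
  induction P using Polynomial.induction_on' with
  | add p p' hp hp' =>
      rw [ofPoly_add, add_mul, redSkew_add, hp, hp', redSkew_add, add_mul]
  | monomial k a =>
      have hL : ofPoly θ4 (monomial k a) * ofPoly θ4 Q = ofPoly θ4 (C a * (tw θ4)^[k] Q) := by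
        rw [ofPoly_monomial, mul_assoc, xpow_mul_ofPoly, c_mul_ofPoly]
      have hR : redSkew h θ2 (ofPoly θ4 (monomial k a)) * redSkew h θ2 (ofPoly θ4 Q)
          = ofPoly θ2 (C (barR h a) * (tw θ2)^[k] (Q.map (barR h))) := by
        rw [redSkew_ofPoly, redSkew_ofPoly, Polynomial.map_monomial, ofPoly_monomial,
          mul_assoc, xpow_mul_ofPoly, c_mul_ofPoly]
      rw [hL, hR, redSkew_ofPoly, Polynomial.map_mul, Polynomial.map_C, tw_map_iter h θ2 θ4 hbc]
end RedSkewLemmas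


section PairLemmas
variable (h : Z4[X]) (θ2 : R2 h →+* R2 h) (θ4 : R4 h →+* R4 h) {r s : ℕ}

lemma redSkew_cSkew (γ : R4 h) :
    redSkew h θ2 (θ4 := θ4) (cSkew θ4 γ) = cSkew θ2 (barR h γ) := by
  rw [← ofPoly_C, redSkew_ofPoly, Polynomial.map_C, ofPoly_C]

lemma redSkew_xSkew :
    redSkew h θ2 (θ4 := θ4) (xSkew (R4 h) θ4) = xSkew (R2 h) θ2 := by
  rw [← ofPoly_X, redSkew_ofPoly, Polynomial.map_X, ofPoly_X]

lemma pairToQuot_zero :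
    pairToQuot h θ2 θ4 (0 : (Fin r → R2 h) × (Fin s → R4 h)) = 0 := by
  show (wordToQuot θ2 (0 : Fin r → R2 h), wordToQuot θ4 (0 : Fin s → R4 h)) = 0
  rw [wordToQuot_zero, wordToQuot_zero]
  rfl

lemma pairToQuot_add (v w : (Fin r → R2 h) × (Fin s → R4 h)) :
    pairToQuot h θ2 θ4 (v + w) = pairToQuot h θ2 θ4 v + pairToQuot h θ2 θ4 w := by
  show (wordToQuot θ2 (v.1 + w.1), wordToQuot θ4 (v.2 + w.2)) = _
  rw [wordToQuot_add, wordToQuot_add]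
  rfl

lemma pairToQuot_neg (v : (Fin r → R2 h) × (Fin s → R4 h)) :
    pairToQuot h θ2 θ4 (-v) = - pairToQuot h θ2 θ4 v := by
  show (wordToQuot θ2 (-v.1), wordToQuot θ4 (-v.2)) = _
  rw [wordToQuot_neg, wordToQuot_neg]
  rfl

lemma smulRtheta_add (a b : Skew (R4 h) θ4) (u : SkewQuot (R2 h) θ2 r × SkewQuot (R4 h) θ4 s) :
    smulRtheta h θ2 θ4 (a + b) u = smulRtheta h θ2 θ4 a u + smulRtheta h θ2 θ4 b u := by
  unfold smulRtheta
  rw [redSkew_add, add_smul, add_smul]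
  rfl

lemma smulRtheta_neg (a : Skew (R4 h) θ4) (u : SkewQuot (R2 h) θ2 r × SkewQuot (R4 h) θ4 s) :
    smulRtheta h θ2 θ4 (-a) u = - smulRtheta h θ2 θ4 a u := by
  unfold smulRtheta
  rw [redSkew_neg, neg_smul, neg_smul]
  rfl

lemma smulRtheta_zero (u : SkewQuot (R2 h) θ2 r × SkewQuot (R4 h) θ4 s) :
    smulRtheta h θ2 θ4 0 u = 0 := by
  unfold smulRtheta
  rw [redSkew_zero, zero_smul, zero_smul]
  rfl

lemma smulRtheta_one (u : SkewQuot (R2 h) θ2 r × SkewQuot (R4 h) θ4 s) :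
    smulRtheta h θ2 θ4 1 u = u := by
  unfold smulRtheta
  rw [redSkew_one, one_smul, one_smul]

lemma smulRtheta_mul (hbc : ∀ a : R4 h, barR h (θ4 a) = θ2 (barR h a))
    (a b : Skew (R4 h) θ4) (u : SkewQuot (R2 h) θ2 r × SkewQuot (R4 h) θ4 s) :
    smulRtheta h θ2 θ4 (a * b) u = smulRtheta h θ2 θ4 a (smulRtheta h θ2 θ4 b u) := by
  unfold smulRtheta
  rw [redSkew_mul h θ2 θ4 hbc, mul_smul, mul_smul]

lemma pairToQuot_smulStar (γ : R4 h) (v : (Fin r → R2 h) × (Fin s → R4 h)) :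
    pairToQuot h θ2 θ4 (smulStar h γ v)
      = smulRtheta h θ2 θ4 (cSkew θ4 γ) (pairToQuot h θ2 θ4 v) := by
  show (wordToQuot θ2 (fun i => barR h γ * v.1 i), wordToQuot θ4 (fun j => γ * v.2 j)) = _
  rw [wordToQuot_smul, wordToQuot_smul]
  show _ = (redSkew h θ2 (cSkew θ4 γ) • wordToQuot θ2 v.1, cSkew θ4 γ • wordToQuot θ4 v.2)
  rw [redSkew_cSkew]

lemma pairToQuot_shift [NeZero r] [NeZero s] (v : (Fin r → R2 h) × (Fin s → R4 h)) :
    pairToQuot h θ2 θ4 (jointShift h θ2 θ4 v)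
      = smulRtheta h θ2 θ4 (xSkew (R4 h) θ4) (pairToQuot h θ2 θ4 v) := by
  show (wordToQuot θ2 (skewShift θ2 v.1), wordToQuot θ4 (skewShift θ4 v.2)) = _
  rw [wordToQuot_shift, wordToQuot_shift]
  show _ = (redSkew h θ2 (xSkew (R4 h) θ4) • wordToQuot θ2 v.1, xSkew (R4 h) θ4 • wordToQuot θ4 v.2)
  rw [redSkew_xSkew]

lemma image_closed [NeZero r] [NeZero s] {C : Set ((Fin r → R2 h) × (Fin s → R4 h))}
    (hlin : IsZ2Z4Linear h C) (hcyc : ∀ v ∈ C, jointShift h θ2 θ4 v ∈ C)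
    (hbc : ∀ a : R4 h, barR h (θ4 a) = θ2 (barR h a))
    (f : Skew (R4 h) θ4) :
    ∀ v ∈ C, ∃ v' ∈ C,
      pairToQuot h θ2 θ4 v' = smulRtheta h θ2 θ4 f (pairToQuot h θ2 θ4 v) := by
  obtain ⟨e, he⟩ := f
  refine Subring.closure_induction
    (p := fun x hx => ∀ v ∈ C, ∃ v' ∈ C,
      pairToQuot h θ2 θ4 v'
        = smulRtheta h θ2 θ4 (⟨x, hx⟩ : Skew (R4 h) θ4) (pairToQuot h θ2 θ4 v))
    ?_ ?_ ?_ ?_ ?_ ?_ he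
  · rintro x (⟨γ, rfl⟩ | rfl)
    · exact fun v hv => ⟨smulStar h γ v, hlin.2.2 γ v hv, pairToQuot_smulStar h θ2 θ4 γ v⟩
    · exact fun v hv => ⟨jointShift h θ2 θ4 v, hcyc v hv, pairToQuot_shift h θ2 θ4 v⟩
  · intro v hv
    exact ⟨0, hlin.1, (pairToQuot_zero h θ2 θ4).trans (smulRtheta_zero h θ2 θ4 _).symm⟩
  · intro v hv
    exact ⟨v, hv, (smulRtheta_one h θ2 θ4 _).symm⟩
  · intro x y hx hy px py v hv
    obtain ⟨v1, hv1, hp1⟩ := px v hv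
    obtain ⟨v2, hv2, hp2⟩ := py v hv
    refine ⟨v1 + v2, hlin.2.1 v1 hv1 v2 hv2, ?_⟩
    have : pairToQuot h θ2 θ4 (v1 + v2)
        = smulRtheta h θ2 θ4 ((⟨x, hx⟩ : Skew (R4 h) θ4) + ⟨y, hy⟩) (pairToQuot h θ2 θ4 v) := by
      rw [pairToQuot_add, hp1, hp2, smulRtheta_add]
    exact this
  · intro x hx px v hv
    obtain ⟨v1, hv1, hp1⟩ := px v hv
    have hneg : -v1 = smulStar h (-1) v1 := by
      unfold smulStar
      refine Prod.ext ?_ ?_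
      · funext i
        show -(v1.1 i) = barR h (-1) * v1.1 i
        rw [map_neg, map_one]
        ring
      · funext j
        show -(v1.2 j) = (-1 : R4 h) * v1.2 j
        ring
    have hmem : -v1 ∈ C := by rw [hneg]; exact hlin.2.2 _ _ hv1
    refine ⟨-v1, hmem, ?_⟩
    have : pairToQuot h θ2 θ4 (-v1)
        = smulRtheta h θ2 θ4 (-(⟨x, hx⟩ : Skew (R4 h) θ4)) (pairToQuot h θ2 θ4 v) := by
      rw [pairToQuot_neg, hp1, smulRtheta_neg]
    exact this
  · intro x y hx hy px py v hv
    obtain ⟨v2, hv2, hp2⟩ := py v hv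
    obtain ⟨v1, hv1, hp1⟩ := px v2 hv2
    refine ⟨v1, hv1, ?_⟩
    have : pairToQuot h θ2 θ4 v1
        = smulRtheta h θ2 θ4 ((⟨x, hx⟩ : Skew (R4 h) θ4) * ⟨y, hy⟩) (pairToQuot h θ2 θ4 v) := by
      rw [smulRtheta_mul h θ2 θ4 hbc, ← hp2, hp1]
    exact this

end PairLemmas

/-- The kernel of the projection `Ψ : C → R₄[x,θ₄]/⟨x^s−1⟩` is
generated by a single element `(f(x),0)` with `f(x)` a right divisor of `x^r−1` in
`R₂[x,θ₂]`; equivalently `I = {f : (f,0) ∈ C}` is a principally generated left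
`R₂[x,θ₂]`-submodule of `R₂[x,θ₂]/⟨x^r−1⟩`. -/
theorem z2z4_skew_cyclic_kernel_principal
    (m : ℕ) (hm : 1 ≤ m) (h : Z4[X]) (hbp : BasicPrimitive h m)
    (θ4 : R4 h →+* R4 h) (hθ4 : ⇑θ4 = thetaFun4 h)
    (θ2 : R2 h →+* R2 h) (hθ2 : ⇑θ2 = thetaFun2 h)
    (r s : ℕ) [NeZero r] [NeZero s]
    (C : Set ((Fin r → R2 h) × (Fin s → R4 h))) (hlin : IsZ2Z4Linear h C)
    (hcyc : ∀ v ∈ C, jointShift h θ2 θ4 v ∈ C)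
 :
    ∃ f : Polynomial (R2 h),
      RDvd (ofPoly θ2 f) (xSkew (R2 h) θ2 ^ r - 1) ∧
      {u ∈ pairToQuot h θ2 θ4 '' C | u.2 = 0} =
        {v : SkewQuot (R2 h) θ2 r × SkewQuot (R4 h) θ4 s |
          ∃ c : Skew (R4 h) θ4, v = smulRtheta h θ2 θ4 c ((Submodule.Quotient.mk (p := skewIdeal (R2 h) θ2 r) (ofPoly θ2 f)), 0)} ∧
      {w : SkewQuot (R2 h) θ2 r | (w, (0 : SkewQuot (R4 h) θ4 s)) ∈ pairToQuot h θ2 θ4 '' C} =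
        ↑(Submodule.span (Skew (R2 h) θ2) {(Submodule.Quotient.mk (p := skewIdeal (R2 h) θ2 r) (ofPoly θ2 f))}) := by
  classical
  obtain ⟨hmon, hdeg2, hirr, hord⟩ := hbp
  have hmax : (Ideal.span {h.map bar}).IsMaximal :=
    PrincipalIdealRing.isMaximal_of_irreducible hirr
  have hfield : IsField (R2 h) := (Ideal.Quotient.maximal_ideal_iff_isField_quotient _).mp hmax
  haveI : Nontrivial (R2 h) := ⟨hfield.exists_pair_ne⟩
  have hinv : ∀ a : R2 h, a ≠ 0 → ∃ b, a * b = 1 := fun a ha => hfield.mul_inv_cancel ha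
  haveI : NoZeroDivisors (R2 h) := by
    refine ⟨fun {a b} hab => ?_⟩
    by_contra hc
    push_neg at hc
    obtain ⟨ai, hai⟩ := hinv a hc.1
    apply hc.2
    calc b = ai * (a * b) := by rw [← mul_assoc, mul_comm ai a, hai, one_mul]
    _ = 0 := by rw [hab, mul_zero]
  have hinj : Function.Injective ⇑θ2 := by
    intro a b hab
    by_contra hne
    obtain ⟨c, hc⟩ := hinv (a - b) (sub_ne_zero.mpr hne)
    have h1 : θ2 ((a - b) * c) = 1 := by rw [hc, map_one]
    rw [map_mul, map_sub, hab, sub_self, zero_mul] at h1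
    exact one_ne_zero h1.symm
  have hbc : ∀ a : R4 h, barR h (θ4 a) = θ2 (barR h a) := by
    intro a
    have h4 : θ4 a = thetaFun4 h a := congrFun hθ4 a
    have h2 : θ2 (barR h a) = thetaFun2 h (barR h a) := congrFun hθ2 (barR h a)
    rw [h4, h2]
    exact barR_theta_comm h hmon a
  have hsm0 : ∀ (cc : Skew (R4 h) θ4) (w : SkewQuot (R2 h) θ2 r),
      smulRtheta h θ2 θ4 cc (w, (0 : SkewQuot (R4 h) θ4 s))
        = (redSkew h θ2 cc • w, 0) := by
    intro cc w
    unfold smulRtheta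
    rw [smul_zero]
  set I' : Set (SkewQuot (R2 h) θ2 r) :=
    {w | (w, (0 : SkewQuot (R4 h) θ4 s)) ∈ pairToQuot h θ2 θ4 '' C} with hI'
  have hI0 : (0 : SkewQuot (R2 h) θ2 r) ∈ I' :=
    ⟨0, hlin.1, pairToQuot_zero h θ2 θ4⟩
  have hIadd : ∀ w ∈ I', ∀ w' ∈ I', w + w' ∈ I' := by
    rintro w ⟨u, hu, huw⟩ w' ⟨u', hu', huw'⟩
    refine ⟨u + u', hlin.2.1 u hu u' hu', ?_⟩
    rw [pairToQuot_add, huw, huw']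
    show (w + w', (0 : SkewQuot (R4 h) θ4 s) + 0) = _
    rw [add_zero]
  have hIsmul : ∀ d : Skew (R2 h) θ2, ∀ w ∈ I', d • w ∈ I' := by
    rintro d w ⟨u, hu, huw⟩
    obtain ⟨cc, hcc⟩ := redSkew_surjective h θ2 θ4 d
    obtain ⟨v', hv', hpv'⟩ := image_closed h θ2 θ4 hlin hcyc hbc cc u hu
    refine ⟨v', hv', ?_⟩
    rw [hpv', huw, hsm0, hcc]
  have hXr0 : (X ^ r - 1 : Polynomial (R2 h)) ≠ 0 := by
    have := Polynomial.X_pow_sub_C_ne_zero (NeZero.pos r) (1 : R2 h)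
    simpa using this
  have hmk0 : (Submodule.Quotient.mk (p := skewIdeal (R2 h) θ2 r)
      (ofPoly θ2 (X ^ r - 1 : Polynomial (R2 h)))) = 0 := by
    rw [ofPoly_sub, ofPoly_X_pow, ofPoly_one]
    exact mk_skewIdeal_xpow_sub_one θ2 r
  set S : Set ℕ := {n | ∃ p : Polynomial (R2 h), p ≠ 0 ∧ p.natDegree = n ∧
      (Submodule.Quotient.mk (p := skewIdeal (R2 h) θ2 r) (ofPoly θ2 p)) ∈ I'} with hSdef
  have hS : S.Nonempty :=
    ⟨(X ^ r - 1 : Polynomial (R2 h)).natDegree,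
      X ^ r - 1, hXr0, rfl, by rw [hmk0]; exact hI0⟩
  obtain ⟨p₀, hp₀ne, hp₀deg, hp₀mem⟩ := Nat.sInf_mem hS
  have hmin : ∀ p : Polynomial (R2 h), p ≠ 0 →
      (Submodule.Quotient.mk (p := skewIdeal (R2 h) θ2 r) (ofPoly θ2 p)) ∈ I' →
      p₀.natDegree ≤ p.natDegree := by
    intro p hp hmem
    rw [hp₀deg]
    exact Nat.sInf_le ⟨p, hp, rfl, hmem⟩
  have hdiv : ∀ p : Polynomial (R2 h),
      (Submodule.Quotient.mk (p := skewIdeal (R2 h) θ2 r) (ofPoly θ2 p)) ∈ I' →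
      ∃ u : Skew (R2 h) θ2, ofPoly θ2 p = u * ofPoly θ2 p₀ := by
    intro p hp
    obtain ⟨u, rem, hequ, hrem⟩ := skew_division θ2 hinj hinv p₀ hp₀ne p
    have hofrem : ofPoly θ2 rem = ofPoly θ2 p + (-u) * ofPoly θ2 p₀ := by
      rw [hequ, neg_mul]
      abel
    have hremmem : (Submodule.Quotient.mk (p := skewIdeal (R2 h) θ2 r)
        (ofPoly θ2 rem)) ∈ I' := by
      rw [hofrem, ← smul_eq_mul (α := Skew (R2 h) θ2), Submodule.Quotient.mk_add,
        Submodule.Quotient.mk_smul]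
      exact hIadd _ hp _ (hIsmul (-u) _ hp₀mem)
    by_cases hrem0 : rem = 0
    · exact ⟨u, by rw [hequ, hrem0, ofPoly_zero, add_zero]⟩
    · exact absurd (hmin rem hrem0 hremmem)
        (not_le.mpr (Polynomial.natDegree_lt_natDegree hrem0 hrem))
  have hRdvd : RDvd (ofPoly θ2 p₀) (xSkew (R2 h) θ2 ^ r - 1) := by
    obtain ⟨u, hu⟩ := hdiv (X ^ r - 1) (by rw [hmk0]; exact hI0)
    exact ⟨u, by rw [← hu, ofPoly_sub, ofPoly_X_pow, ofPoly_one]⟩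
  have hset3 : I' = ↑(Submodule.span (Skew (R2 h) θ2)
      {(Submodule.Quotient.mk (p := skewIdeal (R2 h) θ2 r) (ofPoly θ2 p₀))}) := by
    ext w
    constructor
    · intro hw
      obtain ⟨fq, hfq⟩ := Submodule.Quotient.mk_surjective _ w
      have hmem2 : (Submodule.Quotient.mk (p := skewIdeal (R2 h) θ2 r)
          (ofPoly θ2 (toPoly fq))) ∈ I' := by
        rw [ofPoly_toPoly, hfq]
        exact hw
      obtain ⟨u, hu⟩ := hdiv _ hmem2
      have hwu : w = u • (Submodule.Quotient.mk (p := skewIdeal (R2 h) θ2 r)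
          (ofPoly θ2 p₀)) := by
        rw [← Submodule.Quotient.mk_smul, smul_eq_mul, ← hu, ofPoly_toPoly, hfq]
      rw [hwu]
      exact Submodule.smul_mem _ _ (Submodule.mem_span_singleton_self _)
    · intro hw
      obtain ⟨u, hu⟩ := Submodule.mem_span_singleton.mp hw
      rw [← hu]
      exact hIsmul u _ hp₀mem
  refine ⟨p₀, hRdvd, ?_, hset3⟩
  ext u
  simp only [Set.mem_setOf_eq, Set.mem_sep_iff]
  constructor
  · rintro ⟨huim, hu2⟩
    have hw : u.1 ∈ I' := by
      show (u.1, (0 : SkewQuot (R4 h) θ4 s)) ∈ pairToQuot h θ2 θ4 '' C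
      rw [← hu2]
      exact huim
    rw [hset3] at hw
    obtain ⟨d, hd⟩ := Submodule.mem_span_singleton.mp hw
    obtain ⟨cc, hcc⟩ := redSkew_surjective h θ2 θ4 d
    refine ⟨cc, ?_⟩
    rw [hsm0, hcc, hd, ← hu2]
  · rintro ⟨cc, rfl⟩
    rw [hsm0]
    exact ⟨hIsmul (redSkew h θ2 cc) _ hp₀mem, rfl⟩
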